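/- arXiv:1712.01085 — 3 statements merged into one kernel-verified Lean document; each statement's English description precedes it below -/
import Mathlib

section
/- For solutions of the centralized herding model, the covariance C(X,V)(t) = ∑_i x̂_i·v̂_i satisfies d/dt C(X,V) = V(t) - λ_w X(t) - (λ_x/2) X_φ(t) - (λ_v/2) C_φ(X,V)(t), where X_φ = (1/N)∑_{i,j} φ̂_ij |x̂_i - x̂_j|². -/
open scoped BigOperators RealInnerProductSpace

lemma sym_swap {N M : ℕ} (c : Fin N → Fin N → ℝ) (hc : ∀ i j, c i j = c j i)
    (a b : Fin N → EuclideanSpace ℝ (Fin M)) :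
    ∑ i, ∑ j, c i j * ⟪a i, b j - b i⟫ =
      -(1/2) * ∑ i, ∑ j, c i j * ⟪a i - a j, b i - b j⟫ := by
  have hS : ∑ i, ∑ j, c i j * ⟪a j, b j⟫ = ∑ i, ∑ j, c i j * ⟪a i, b i⟫ := by
    rw [Finset.sum_comm]
    exact Finset.sum_congr rfl fun i _ => Finset.sum_congr rfl fun j _ => by rw [hc]
  have hR : ∑ i, ∑ j, c i j * ⟪a j, b i⟫ = ∑ i, ∑ j, c i j * ⟪a i, b j⟫ := by
    rw [Finset.sum_comm]
    exact Finset.sum_congr rfl fun i _ => Finset.sum_congr rfl fun j _ => by rw [hc]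
  have e1 : ∑ i, ∑ j, c i j * ⟪a i, b j - b i⟫ =
      (∑ i, ∑ j, c i j * ⟪a i, b j⟫) - ∑ i, ∑ j, c i j * ⟪a i, b i⟫ := by
    simp only [inner_sub_right, mul_sub, Finset.sum_sub_distrib]
  have e2 : ∑ i, ∑ j, c i j * ⟪a i - a j, b i - b j⟫ =
      ((∑ i, ∑ j, c i j * ⟪a i, b i⟫) - ∑ i, ∑ j, c i j * ⟪a i, b j⟫)
      - ((∑ i, ∑ j, c i j * ⟪a j, b i⟫) - ∑ i, ∑ j, c i j * ⟪a j, b j⟫) := by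
    simp only [inner_sub_left, inner_sub_right, mul_sub, sub_mul, Finset.sum_sub_distrib]
    ring
  rw [e1, e2, hS, hR]; ring

theorem C_deriv (N M : ℕ) (hN : 0 < N)
    (x v : Fin N → ℝ → EuclideanSpace ℝ (Fin M))
    (φ : Fin N → Fin N → ℝ → ℝ) (hφ : ∀ i j t, φ i j t = φ j i t)
    (lx lv lw : ℝ) (t : ℝ)
    (hx : ∀ i, HasDerivAt (x i) (v i t) t)
    (hv : ∀ i, HasDerivAt (v i)
      ((lx / N) • ∑ j, φ i j t • (x j t - x i t)
        + (lv / N) • ∑ j, φ i j t • (v j t - v i t)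
        - lw • x i t) t) :
    HasDerivAt (fun s => ∑ i, ⟪x i s, v i s⟫)
      ((∑ i, ‖v i t‖ ^ 2) - lw * ∑ i, ‖x i t‖ ^ 2
        - (lx / 2) * ((1 / (N : ℝ)) * ∑ i, ∑ j, φ i j t * ‖x i t - x j t‖ ^ 2)
        - (lv / 2) * ((1 / (N : ℝ)) * ∑ i, ∑ j, φ i j t * ⟪x i t - x j t, v i t - v j t⟫)) t := by
  have hd : HasDerivAt (fun s => ∑ i, ⟪x i s, v i s⟫)
      (∑ i, (⟪x i t, ((lx / N) • ∑ j, φ i j t • (x j t - x i t)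
        + (lv / N) • ∑ j, φ i j t • (v j t - v i t)
        - lw • x i t)⟫ + ⟪v i t, v i t⟫)) t :=
    HasDerivAt.fun_sum fun i _ => (hx i).inner ℝ (hv i)
  convert hd using 1
  have expand : ∀ i, ⟪x i t, ((lx / N) • ∑ j, φ i j t • (x j t - x i t)
        + (lv / N) • ∑ j, φ i j t • (v j t - v i t)
        - lw • x i t)⟫
      = (lx / N) * ∑ j, φ i j t * ⟪x i t, x j t - x i t⟫
        + (lv / N) * ∑ j, φ i j t * ⟪x i t, v j t - v i t⟫
        - lw * ⟪x i t, x i t⟫ := by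
    intro i
    simp only [inner_sub_right, inner_add_right, real_inner_smul_right, inner_sum]
  simp only [expand]
  rw [Finset.sum_add_distrib, Finset.sum_sub_distrib, Finset.sum_add_distrib,
    ← Finset.mul_sum, ← Finset.mul_sum, ← Finset.mul_sum]
  have hx2 : ∑ i, ∑ j, φ i j t * ⟪x i t, x j t - x i t⟫ =
      -(1/2) * ∑ i, ∑ j, φ i j t * ‖x i t - x j t‖ ^ 2 := by
    rw [sym_swap (fun i j => φ i j t) (fun i j => hφ i j t) (fun i => x i t) (fun i => x i t)]
    simp only [real_inner_self_eq_norm_sq]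
  have hv2 : ∑ i, ∑ j, φ i j t * ⟪x i t, v j t - v i t⟫ =
      -(1/2) * ∑ i, ∑ j, φ i j t * ⟪x i t - x j t, v i t - v j t⟫ :=
    sym_swap (fun i j => φ i j t) (fun i j => hφ i j t) (fun i => x i t) (fun i => v i t)
  rw [hx2, hv2]
  simp only [real_inner_self_eq_norm_sq]
  ring
end

section
/- For solutions of the centralized herding model with φ̂_ij = (1+|x̂_i-x̂_j|²)^{-γ/2} and any λ_x, λ_v, λ_w > 0, the energy E₂(t) = λ_w ∑|x̂_i|² + ∑|v̂_i|² + (λ_x/β_γ) S_γ(t) satisfies E₂'(t) = -λ_v V_φ(t) ≤ 0; in particular E₂ is non-increasing. -/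
open scoped BigOperators RealInnerProductSpace InnerProductSpace

private lemma hasDerivAt_norm_sq' {M : ℕ} {f : ℝ → EuclideanSpace ℝ (Fin M)}
    {f' : EuclideanSpace ℝ (Fin M)} {t : ℝ} (hf : HasDerivAt f f' t) :
    HasDerivAt (fun s => ‖f s‖ ^ 2) (2 * ⟪f t, f'⟫_ℝ) t := by
  have h : HasDerivAt (fun s => ⟪f s, f s⟫_ℝ) (⟪f t, f'⟫_ℝ + ⟪f', f t⟫_ℝ) t :=
    HasDerivAt.inner ℝ hf hf
  have hfun : (fun s => ‖f s‖ ^ 2) = fun s => ⟪f s, f s⟫_ℝ := by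
    funext s; rw [real_inner_self_eq_norm_sq]
  rw [hfun, show 2 * ⟪f t, f'⟫_ℝ = ⟪f t, f'⟫_ℝ + ⟪f', f t⟫_ℝ by
    rw [real_inner_comm f' (f t)]; ring]
  exact h

private lemma pair_deriv' {M : ℕ} {γ : ℝ} (hγ : 0 < γ) {u : ℝ → EuclideanSpace ℝ (Fin M)}
    {u' : EuclideanSpace ℝ (Fin M)} {t : ℝ} (hu : HasDerivAt u u' t) :
    HasDerivAt (fun s => if γ < 2 then (1 + ‖u s‖ ^ 2) ^ (-((γ - 2) / 2)) - 1
      else if γ = 2 then Real.log (1 + ‖u s‖ ^ 2)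
      else 1 - (1 + ‖u s‖ ^ 2) ^ (-((γ - 2) / 2)))
    ((if γ = 2 then 2 else |2 - γ|) * ((1 + ‖u t‖ ^ 2) ^ (-(γ / 2)) * ⟪u t, u'⟫_ℝ)) t := by
  have hbase : (0:ℝ) < 1 + ‖u t‖ ^ 2 := by positivity
  have hb : HasDerivAt (fun s => 1 + ‖u s‖ ^ 2) (2 * ⟪u t, u'⟫_ℝ) t :=
    (hasDerivAt_norm_sq' hu).const_add 1
  rcases lt_trichotomy γ 2 with h | h | h
  · simp only [if_pos h, if_neg (ne_of_lt h)]
    have hr := (hb.rpow_const (p := -((γ - 2) / 2)) (Or.inl (ne_of_gt hbase))).sub_const 1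
    refine hr.congr_deriv ?_
    rw [show -((γ - 2) / 2) - 1 = -(γ / 2) by ring, abs_of_pos (by linarith : (0:ℝ) < 2 - γ)]
    ring
  · subst h
    have hl := hb.log (ne_of_gt hbase)
    have h2 : ¬ ((2:ℝ) < 2) := lt_irrefl 2
    simp only [h2, if_false, if_true, ite_true, ite_false, if_neg, if_pos]
    convert hl using 1
    rw [show -(2 / 2 : ℝ) = -1 by norm_num, Real.rpow_neg_one]
    field_simp
  · simp only [if_neg (not_lt.mpr (le_of_lt h)), if_neg (ne_of_gt h)]
    have hr := (hb.rpow_const (p := -((γ - 2) / 2)) (Or.inl (ne_of_gt hbase))).const_sub 1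
    refine hr.congr_deriv ?_
    rw [show -((γ - 2) / 2) - 1 = -(γ / 2) by ring, abs_of_neg (by linarith : (2:ℝ) - γ < 0)]
    ring

private lemma swap_sum' {N : ℕ} (w : Fin N → Fin N → ℝ) (hw : ∀ i j, w i j = w j i)
    (f : Fin N → Fin N → ℝ) :
    ∑ i, ∑ j, w i j * f i j = ∑ i, ∑ j, w i j * f j i := by
  rw [Finset.sum_comm]
  exact Finset.sum_congr rfl fun i _ => Finset.sum_congr rfl fun j _ => by rw [hw]

private lemma key_identity' {M N : ℕ} (lx lv lw β : ℝ) (hβ : β ≠ 0)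
    (w : Fin N → Fin N → ℝ) (hw : ∀ i j, w i j = w j i)
    (X V : Fin N → EuclideanSpace ℝ (Fin M)) :
    lw * ∑ i, 2 * ⟪X i, V i⟫_ℝ +
      ∑ i, 2 * ⟪V i, (lx / N) • ∑ j, w i j • (X j - X i)
          + (lv / N) • ∑ j, w i j • (V j - V i) - lw • X i⟫_ℝ +
      (lx / β) * ((1 / (N : ℝ)) * ∑ i, ∑ j, β * (w i j * ⟪X i - X j, V i - V j⟫_ℝ)) =
      -(lv * ((1 / (N : ℝ)) * ∑ i, ∑ j, w i j * ‖V i - V j‖ ^ 2)) := by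
  -- abbreviations
  have sw1 : ∑ i, ∑ j, w i j * ⟪V j, X j⟫_ℝ = ∑ i, ∑ j, w i j * ⟪V i, X i⟫_ℝ :=
    (swap_sum' w hw fun i _ => ⟪V i, X i⟫_ℝ).symm
  have sw2 : ∑ i, ∑ j, w i j * ⟪V j, X i⟫_ℝ = ∑ i, ∑ j, w i j * ⟪V i, X j⟫_ℝ :=
    (swap_sum' w hw fun i j => ⟪V i, X j⟫_ℝ).symm
  have sw3 : ∑ i, ∑ j, w i j * ⟪V j, V j⟫_ℝ = ∑ i, ∑ j, w i j * ⟪V i, V i⟫_ℝ :=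
    (swap_sum' w hw fun i _ => ⟪V i, V i⟫_ℝ).symm
  have sw4 : ∑ i, ∑ j, w i j * ⟪V j, V i⟫_ℝ = ∑ i, ∑ j, w i j * ⟪V i, V j⟫_ℝ :=
    (swap_sum' w hw fun i j => ⟪V i, V j⟫_ℝ).symm
  -- expansion of the S'-term
  have hP : ∑ i, ∑ j, w i j * ⟪X i - X j, V i - V j⟫_ℝ
      = 2 * (∑ i, ∑ j, w i j * ⟪V i, X i⟫_ℝ) - 2 * (∑ i, ∑ j, w i j * ⟪V i, X j⟫_ℝ) := by
    have : ∑ i, ∑ j, w i j * ⟪X i - X j, V i - V j⟫_ℝ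
        = ∑ i, ∑ j, (w i j * ⟪V i, X i⟫_ℝ - w i j * ⟪V i, X j⟫_ℝ
            - w i j * ⟪V j, X i⟫_ℝ + w i j * ⟪V j, X j⟫_ℝ) := by
      refine Finset.sum_congr rfl fun i _ => Finset.sum_congr rfl fun j _ => ?_
      rw [real_inner_comm, inner_sub_left, inner_sub_right, inner_sub_right]; ring
    rw [this]
    simp only [Finset.sum_add_distrib, Finset.sum_sub_distrib]
    rw [sw1, sw2]; ring
  -- expansion of the V_phi-term
  have hQ : ∑ i, ∑ j, w i j * ‖V i - V j‖ ^ 2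
      = 2 * (∑ i, ∑ j, w i j * ⟪V i, V i⟫_ℝ) - 2 * (∑ i, ∑ j, w i j * ⟪V i, V j⟫_ℝ) := by
    have : ∑ i, ∑ j, w i j * ‖V i - V j‖ ^ 2
        = ∑ i, ∑ j, (w i j * ⟪V i, V i⟫_ℝ - w i j * ⟪V i, V j⟫_ℝ
            - w i j * ⟪V j, V i⟫_ℝ + w i j * ⟪V j, V j⟫_ℝ) := by
      refine Finset.sum_congr rfl fun i _ => Finset.sum_congr rfl fun j _ => ?_
      rw [← real_inner_self_eq_norm_sq, inner_sub_left, inner_sub_right, inner_sub_right]; ring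
    rw [this]
    simp only [Finset.sum_add_distrib, Finset.sum_sub_distrib]
    rw [sw3, sw4]; ring
  -- expansion of the velocity-derivative term
  have c2 : (∑ i, 2 * ⟪V i, (lx / N) • ∑ j, w i j • (X j - X i)
          + (lv / N) • ∑ j, w i j • (V j - V i) - lw • X i⟫_ℝ)
      = 2 * (lx / (N:ℝ)) * ((∑ i, ∑ j, w i j * ⟪V i, X j⟫_ℝ) - ∑ i, ∑ j, w i j * ⟪V i, X i⟫_ℝ)
        + 2 * (lv / (N:ℝ)) * ((∑ i, ∑ j, w i j * ⟪V i, V j⟫_ℝ) - ∑ i, ∑ j, w i j * ⟪V i, V i⟫_ℝ)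
        - 2 * lw * ∑ i, ⟪V i, X i⟫_ℝ := by
    have hterm : ∀ i, 2 * ⟪V i, (lx / N) • ∑ j, w i j • (X j - X i)
          + (lv / N) • ∑ j, w i j • (V j - V i) - lw • X i⟫_ℝ
        = 2 * (lx / (N:ℝ)) * ((∑ j, w i j * ⟪V i, X j⟫_ℝ) - ∑ j, w i j * ⟪V i, X i⟫_ℝ)
          + 2 * (lv / (N:ℝ)) * ((∑ j, w i j * ⟪V i, V j⟫_ℝ) - ∑ j, w i j * ⟪V i, V i⟫_ℝ)
          - 2 * lw * ⟪V i, X i⟫_ℝ := by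
      intro i
      simp only [inner_sub_right, inner_add_right, inner_sum, real_inner_smul_right, mul_sub,
        Finset.sum_sub_distrib]
      ring
    rw [Finset.sum_congr rfl fun i _ => hterm i]
    simp only [Finset.sum_add_distrib, Finset.sum_sub_distrib, ← Finset.mul_sum]
  -- first term
  have c1 : ∑ i, 2 * ⟪X i, V i⟫_ℝ = 2 * ∑ i, ⟪V i, X i⟫_ℝ := by
    rw [Finset.mul_sum]
    exact Finset.sum_congr rfl fun i _ => by rw [real_inner_comm]
  -- pull β out of the double sum
  have c3 : ∑ i, ∑ j, β * (w i j * ⟪X i - X j, V i - V j⟫_ℝ)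
      = β * ∑ i, ∑ j, w i j * ⟪X i - X j, V i - V j⟫_ℝ := by
    simp only [Finset.mul_sum]
  rw [c1, c2, c3, hP, hQ]
  have hb2 : ∀ z : ℝ, lx / β * (1 / (N:ℝ) * (β * z)) = lx * (1 / (N:ℝ) * z) := by
    intro z
    rw [div_eq_mul_inv]
    calc lx * β⁻¹ * (1 / (N:ℝ) * (β * z)) = β * β⁻¹ * (lx * (1 / (N:ℝ) * z)) := by ring
      _ = lx * (1 / (N:ℝ) * z) := by rw [mul_inv_cancel₀ hβ, one_mul]
  rw [hb2]
  ring

theorem E2_monotone (N M : ℕ) (hN : 0 < N) (γ lx lv lw : ℝ)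
    (hγ : 0 < γ) (hlx : 0 < lx) (hlv : 0 < lv) (hlw : 0 < lw)
    (x v : Fin N → ℝ → EuclideanSpace ℝ (Fin M))
    (φ : Fin N → Fin N → ℝ → ℝ)
    (hφdef : ∀ i j s, φ i j s = (1 + ‖x i s - x j s‖ ^ 2) ^ (-(γ / 2)))
    (hx : ∀ i (s : ℝ), HasDerivAt (x i) (v i s) s)
    (hv : ∀ i (s : ℝ), HasDerivAt (v i)
      ((lx / N) • ∑ j, φ i j s • (x j s - x i s)
        + (lv / N) • ∑ j, φ i j s • (v j s - v i s)
        - lw • x i s) s) :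
    (∀ t : ℝ,
      HasDerivAt
        (fun s => lw * ∑ i, ‖x i s‖ ^ 2 + ∑ i, ‖v i s‖ ^ 2
          + (lx / (if γ = 2 then 2 else |2 - γ|)) *
            ((1 / (N : ℝ)) * ∑ i, ∑ j,
              (if γ < 2 then (1 + ‖x i s - x j s‖ ^ 2) ^ (-((γ - 2) / 2)) - 1
               else if γ = 2 then Real.log (1 + ‖x i s - x j s‖ ^ 2)
               else 1 - (1 + ‖x i s - x j s‖ ^ 2) ^ (-((γ - 2) / 2)))))
        (-(lv * ((1 / (N : ℝ)) * ∑ i, ∑ j, φ i j t * ‖v i t - v j t‖ ^ 2))) t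
      ∧ -(lv * ((1 / (N : ℝ)) * ∑ i, ∑ j, φ i j t * ‖v i t - v j t‖ ^ 2)) ≤ 0)
    ∧ Antitone
        (fun s => lw * ∑ i, ‖x i s‖ ^ 2 + ∑ i, ‖v i s‖ ^ 2
          + (lx / (if γ = 2 then 2 else |2 - γ|)) *
            ((1 / (N : ℝ)) * ∑ i, ∑ j,
              (if γ < 2 then (1 + ‖x i s - x j s‖ ^ 2) ^ (-((γ - 2) / 2)) - 1
               else if γ = 2 then Real.log (1 + ‖x i s - x j s‖ ^ 2)
               else 1 - (1 + ‖x i s - x j s‖ ^ 2) ^ (-((γ - 2) / 2))))) := by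
  set β : ℝ := if γ = 2 then 2 else |2 - γ| with hβdef
  have hβ : β ≠ 0 := by
    rw [hβdef]; split
    · norm_num
    · next h => exact abs_ne_zero.mpr (by intro hc; exact h (by linarith [sub_eq_zero.mp hc])) 
  have hφsymm : ∀ (t : ℝ) i j, φ i j t = φ j i t := by
    intro t i j; rw [hφdef, hφdef, norm_sub_rev]
  have hφnonneg : ∀ (t : ℝ) i j, 0 ≤ φ i j t := by
    intro t i j; rw [hφdef]; positivity
  have main : ∀ t : ℝ,
      HasDerivAt
        (fun s => lw * ∑ i, ‖x i s‖ ^ 2 + ∑ i, ‖v i s‖ ^ 2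
          + (lx / β) *
            ((1 / (N : ℝ)) * ∑ i, ∑ j,
              (if γ < 2 then (1 + ‖x i s - x j s‖ ^ 2) ^ (-((γ - 2) / 2)) - 1
               else if γ = 2 then Real.log (1 + ‖x i s - x j s‖ ^ 2)
               else 1 - (1 + ‖x i s - x j s‖ ^ 2) ^ (-((γ - 2) / 2)))))
        (-(lv * ((1 / (N : ℝ)) * ∑ i, ∑ j, φ i j t * ‖v i t - v j t‖ ^ 2))) t := by
    intro t
    have h1 : HasDerivAt (fun s => lw * ∑ i, ‖x i s‖ ^ 2)
        (lw * ∑ i, 2 * ⟪x i t, v i t⟫_ℝ) t :=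
      HasDerivAt.const_mul lw (HasDerivAt.fun_sum fun i _ => hasDerivAt_norm_sq' (hx i t))
    have h2 : HasDerivAt (fun s => ∑ i, ‖v i s‖ ^ 2)
        (∑ i, 2 * ⟪v i t, (lx / N) • ∑ j, φ i j t • (x j t - x i t)
          + (lv / N) • ∑ j, φ i j t • (v j t - v i t) - lw • x i t⟫_ℝ) t :=
      HasDerivAt.fun_sum fun i _ => hasDerivAt_norm_sq' (hv i t)
    have hpair : ∀ i j : Fin N, HasDerivAt
        (fun s => if γ < 2 then (1 + ‖x i s - x j s‖ ^ 2) ^ (-((γ - 2) / 2)) - 1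
          else if γ = 2 then Real.log (1 + ‖x i s - x j s‖ ^ 2)
          else 1 - (1 + ‖x i s - x j s‖ ^ 2) ^ (-((γ - 2) / 2)))
        (β * (φ i j t * ⟪x i t - x j t, v i t - v j t⟫_ℝ)) t := by
      intro i j
      rw [hφdef i j t, hβdef]
      exact pair_deriv' hγ ((hx i t).sub (hx j t))
    have h3 : HasDerivAt (fun s => (lx / β) *
          ((1 / (N : ℝ)) * ∑ i, ∑ j,
            (if γ < 2 then (1 + ‖x i s - x j s‖ ^ 2) ^ (-((γ - 2) / 2)) - 1
             else if γ = 2 then Real.log (1 + ‖x i s - x j s‖ ^ 2)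
             else 1 - (1 + ‖x i s - x j s‖ ^ 2) ^ (-((γ - 2) / 2)))))
        ((lx / β) * ((1 / (N : ℝ)) *
          ∑ i, ∑ j, β * (φ i j t * ⟪x i t - x j t, v i t - v j t⟫_ℝ))) t :=
      HasDerivAt.const_mul (lx / β) (HasDerivAt.const_mul (1 / (N : ℝ))
        (HasDerivAt.fun_sum fun i _ => HasDerivAt.fun_sum fun j _ => hpair i j))
    have H := (h1.add h2).add h3
    have hval := key_identity' (M := M) lx lv lw β hβ (fun i j => φ i j t)
      (fun i j => hφsymm t i j) (fun i => x i t) (fun i => v i t)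
    exact hval ▸ H
  have hnp : ∀ t : ℝ,
      -(lv * ((1 / (N : ℝ)) * ∑ i, ∑ j, φ i j t * ‖v i t - v j t‖ ^ 2)) ≤ 0 := by
    intro t
    have : 0 ≤ lv * ((1 / (N : ℝ)) * ∑ i, ∑ j, φ i j t * ‖v i t - v j t‖ ^ 2) := by
      apply mul_nonneg hlv.le
      apply mul_nonneg (by positivity)
      exact Finset.sum_nonneg fun i _ => Finset.sum_nonneg fun j _ =>
        mul_nonneg (hφnonneg t i j) (by positivity)
    linarith
  refine ⟨fun t => ⟨main t, hnp t⟩, ?_⟩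
  exact antitone_of_hasDerivAt_nonpos (f' := fun t =>
    -(lv * ((1 / (N : ℝ)) * ∑ i, ∑ j, φ i j t * ‖v i t - v j t‖ ^ 2))) main hnp
end

section
/- Suppose at time t all v̂_i are equal (hence, since ∑ v̂_i = 0, all zero) but the x̂_i are not all equal. Then there exist indices i₀ ≠ j₀ and a coordinate d such that v̂_i₀'^d - v̂_j₀'^d > 0, where v̂_i' = (λ_x/N)∑_k φ̂_ik(x̂_k - x̂_i) - λ_w x̂_i; indeed one may take i₀ attaining the minimum and j₀ attaining the maximum of the d-th coordinates of the x̂_i, for any coordinate d where not all values coincide. -/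
open scoped BigOperators

theorem exists_strict_velocity_gap (N M : ℕ) (hN : 0 < N) (γ lx lw : ℝ)
    (hγ : 0 < γ) (hlx : 0 < lx) (hlw : 0 < lw)
    (x : Fin N → EuclideanSpace ℝ (Fin M))
    (φ : Fin N → Fin N → ℝ)
    (hφdef : ∀ i k, φ i k = (1 + ‖x i - x k‖ ^ 2) ^ (-(γ / 2)))
    (hmean : ∑ i, x i = 0)
    (hne : ∃ i j, x i ≠ x j) :
    ∃ (i₀ j₀ : Fin N) (d : Fin M), i₀ ≠ j₀ ∧
      (∀ i, x i₀ d ≤ x i d) ∧ (∀ i, x i d ≤ x j₀ d) ∧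
      0 < ((lx / N) • ∑ k, φ i₀ k • (x k - x i₀) - lw • x i₀) d
          - ((lx / N) • ∑ k, φ j₀ k • (x k - x j₀) - lw • x j₀) d := by
  obtain ⟨i, j, hij⟩ := hne
  have hd : ∃ d : Fin M, x i d ≠ x j d := by
    by_contra h
    push_neg at h
    exact hij (PiLp.ext h)
  obtain ⟨d, hdne⟩ := hd
  obtain ⟨i₀, -, hmin⟩ := Finset.exists_min_image Finset.univ (fun i => x i d)
    ⟨i, Finset.mem_univ i⟩
  obtain ⟨j₀, -, hmax⟩ := Finset.exists_max_image Finset.univ (fun i => x i d)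
    ⟨i, Finset.mem_univ i⟩
  have hmin' : ∀ k, x i₀ d ≤ x k d := fun k => hmin k (Finset.mem_univ k)
  have hmax' : ∀ k, x k d ≤ x j₀ d := fun k => hmax k (Finset.mem_univ k)
  have hlt : x i₀ d < x j₀ d := by
    rcases lt_or_eq_of_le (le_trans (hmin' i) (hmax' i)) with h | h
    · exact h
    · exfalso
      apply hdne
      have h1 : x i d = x j₀ d := le_antisymm (hmax' i) (h ▸ hmin' i)
      have h2 : x j d = x j₀ d := le_antisymm (hmax' j) (h ▸ hmin' j)
      rw [h1, h2]
  have hφpos : ∀ a b : Fin N, 0 < φ a b := by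
    intro a b
    rw [hφdef]
    exact Real.rpow_pos_of_pos (by positivity) _
  refine ⟨i₀, j₀, d, ?_, hmin', hmax', ?_⟩
  · rintro rfl
    exact absurd hlt (lt_irrefl _)
  have hNpos : (0:ℝ) < N := Nat.cast_pos.mpr hN
  have heval : ∀ a : Fin N,
      ((lx / N) • ∑ k, φ a k • (x k - x a) - lw • x a) d
        = (lx / N) * (∑ k, φ a k * (x k d - x a d)) - lw * x a d := by
    intro a
    have hsum : (∑ k, φ a k • (x k - x a)) d = ∑ k, φ a k * (x k d - x a d) := by
      change (∑ k, φ a k • (x k - x a)) d = _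
      rw [WithLp.ofLp_sum, Finset.sum_apply]
      simp [PiLp.smul_apply, PiLp.sub_apply, smul_eq_mul]
    simp [PiLp.smul_apply, PiLp.sub_apply, smul_eq_mul, hsum, Finset.mul_sum]
  rw [heval, heval]
  have hS1 : 0 ≤ ∑ k, φ i₀ k * (x k d - x i₀ d) :=
    Finset.sum_nonneg fun k _ =>
      mul_nonneg (hφpos i₀ k).le (sub_nonneg.mpr (hmin' k))
  have hS2 : (∑ k, φ j₀ k * (x k d - x j₀ d)) ≤ 0 :=
    Finset.sum_nonpos fun k _ =>
      mul_nonpos_of_nonneg_of_nonpos (hφpos j₀ k).le (sub_nonpos.mpr (hmax' k))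
  have hc : (0:ℝ) < lx / N := div_pos hlx hNpos
  nlinarith [mul_le_mul_of_nonneg_left hS2 hc.le, mul_le_mul_of_nonneg_left hS1 hc.le,
    mul_lt_mul_of_pos_left hlt hlw]
end
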